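/- The region Ω₀ bounded by the coordinate axes and the curve γ has area π²; equivalently, ∫₀^{2π} (2 sin(α/2) − α cos(α/2)) · ((2π − α)/2) · sin(α/2) dα = π². -/

import Mathlib

open Real

theorem stmt6 :
    ∫ α in (0:ℝ)..(2*π),
      (2 * Real.sin (α/2) - α * Real.cos (α/2)) * ((2*π - α)/2) * Real.sin (α/2)
      = π^2 := by
  have key : ∀ α ∈ Set.uIcc (0:ℝ) (2*π),
      HasDerivAt (fun x : ℝ => π*x - x^2/4 + (x - 3*π/2) * Real.sin x
        + (1 + (2*π*x - x^2)/4) * Real.cos x)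
      ((2 * Real.sin (α/2) - α * Real.cos (α/2)) * ((2*π - α)/2) * Real.sin (α/2)) α := by
    intro α _
    have A : HasDerivAt (fun x : ℝ => π*x - x^2/4) (π - 2*α/4) α := by
      simpa using (((hasDerivAt_id α).const_mul π).fun_sub ((hasDerivAt_pow 2 α).div_const 4))
    have B : HasDerivAt (fun x : ℝ => (x - 3*π/2) * Real.sin x)
        (1 * Real.sin α + (α - 3*π/2) * Real.cos α) α :=
      ((hasDerivAt_id α).sub_const (3*π/2)).mul (Real.hasDerivAt_sin α)
    have C : HasDerivAt (fun x : ℝ => (1 + (2*π*x - x^2)/4) * Real.cos x)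
        ((2*π - 2*α)/4 * Real.cos α + (1 + (2*π*α - α^2)/4) * (-Real.sin α)) α := by
      have h1 : HasDerivAt (fun x : ℝ => 1 + (2*π*x - x^2)/4) ((2*π - 2*α)/4) α := by
        have := (((hasDerivAt_id α).const_mul (2*π)).sub (hasDerivAt_pow 2 α)).div_const 4
        simpa using this.const_add 1
      exact h1.mul (Real.hasDerivAt_cos α)
    have := (A.fun_add B).fun_add C
    refine this.congr_deriv ?_
    have hsin : Real.sin α = 2 * Real.sin (α/2) * Real.cos (α/2) := by
      have h1 := Real.sin_two_mul (α/2)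
      rw [show (2:ℝ)*(α/2) = α by ring] at h1
      linarith
    have hcos : Real.cos α = 1 - 2 * Real.sin (α/2)^2 := by
      have h1 := Real.cos_two_mul (α/2)
      have h2 := Real.sin_sq_add_cos_sq (α/2)
      rw [show (2:ℝ)*(α/2) = α by ring] at h1
      nlinarith
    rw [hsin, hcos]; ring
  rw [intervalIntegral.integral_eq_sub_of_hasDerivAt key
    (by apply Continuous.intervalIntegrable; fun_prop)]
  simp [Real.sin_two_pi, Real.cos_two_pi]
  ring
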